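/- A set W of vertices of a digraph G is the set of roots of some maximum out forest of G if and only if W is a vertex basis of G, i.e., every vertex of G is reachable from some vertex of W and no two distinct vertices of W are reachable from each other. -/

import Mathlib

/-- The arc relation of a finite arc set. -/
def arcRel {V : Type*} [DecidableEq V] (F : Finset (V × V)) : V → V → Prop :=
  fun a b => (a, b) ∈ F

/-- A diverging forest: no directed cycles, and every vertex has in-degree at most 1. -/
def IsDivForest {V : Type*} [DecidableEq V] (F : Finset (V × V)) : Prop :=
  (∀ v, ¬ Relation.TransGen (arcRel F) v v) ∧
  ∀ w z₁ z₂, (z₁, w) ∈ F → (z₂, w) ∈ F → z₁ = z₂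

/-- A maximum out forest of the digraph with arc set `E`. -/
def IsMaxOutForest {V : Type*} [DecidableEq V] (E F : Finset (V × V)) : Prop :=
  F ⊆ E ∧ IsDivForest F ∧
  ∀ F' : Finset (V × V), F' ⊆ E → IsDivForest F' → F'.card ≤ F.card

/-- `W` is a vertex basis of the digraph with arc set `E`: every vertex is reachable
from some member of `W`, and distinct members of `W` are mutually unreachable. -/
def IsVertexBasis {V : Type*} [DecidableEq V] (E : Finset (V × V)) (W : Set V) : Prop :=
  (∀ v, ∃ w ∈ W, Relation.ReflTransGen (arcRel E) w v) ∧
  ∀ w₁ ∈ W, ∀ w₂ ∈ W, w₁ ≠ w₂ → ¬ Relation.ReflTransGen (arcRel E) w₁ w₂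

section Aux

open Relation Finset

variable {V : Type*} [Fintype V] [DecidableEq V]

/-- In a diverging forest, every vertex is reachable from some root. -/
lemma forest_reach (F : Finset (V × V)) (hF : IsDivForest F) (v : V) :
    ∃ w, (∀ u, (u, w) ∉ F) ∧ Relation.ReflTransGen (arcRel F) w v := by
  have hirr : IsIrrefl V (Relation.TransGen (arcRel F)) := ⟨hF.1⟩
  have hwf : WellFounded (Relation.TransGen (arcRel F)) :=
    Finite.wellFounded_of_trans_of_irrefl _
  have hwf2 : WellFounded (arcRel F) :=
    Subrelation.wf (fun h => Relation.TransGen.single h) hwf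
  refine hwf2.induction (C := fun x => ∃ w, (∀ u, (u, w) ∉ F) ∧
    Relation.ReflTransGen (arcRel F) w x) v ?_
  intro x ih
  by_cases hx : ∃ u, (u, x) ∈ F
  · obtain ⟨u, hu⟩ := hx
    obtain ⟨w, hw, hpath⟩ := ih u hu
    exact ⟨w, hw, hpath.tail hu⟩
  · push_neg at hx
    exact ⟨x, hx, Relation.ReflTransGen.refl⟩

/-- Counting: arcs plus roots equals all vertices. -/
lemma forest_card (F : Finset (V × V)) (hF : IsDivForest F) :
    F.card + (Finset.univ.filter (fun v => ∀ u, (u, v) ∉ F)).card = Fintype.card V := by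
  classical
  have hinj : Set.InjOn Prod.snd (F : Set (V × V)) := by
    intro a ha b hb hab
    have := hF.2 a.2 a.1 b.1 (by simpa using ha) (by rw [hab]; simpa using hb)
    exact Prod.ext this hab
  have himg : F.image Prod.snd =
      Finset.univ.filter (fun v => ¬ ∀ u, (u, v) ∉ F) := by
    ext v
    simp only [Finset.mem_image, Finset.mem_filter, Finset.mem_univ, true_and, not_forall,
      not_not]
    constructor
    · rintro ⟨⟨a, b⟩, hab, rfl⟩; exact ⟨a, hab⟩
    · rintro ⟨u, hu⟩; exact ⟨(u, v), hu, rfl⟩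
  have hc : F.card = (Finset.univ.filter (fun v => ¬ ∀ u, (u, v) ∉ F)).card := by
    rw [← himg, Finset.card_image_of_injOn hinj]
  rw [hc, add_comm]
  rw [Finset.card_filter_add_card_filter_not]
  exact (Finset.card_univ)

/-- From a dominating finset of vertices, build a forest whose roots are exactly that set. -/
lemma build_forest (E : Finset (V × V)) (Wf : Finset V)
    (hdom : ∀ v, ∃ w ∈ Wf, Relation.ReflTransGen (arcRel E) w v) :
    ∃ F : Finset (V × V), F ⊆ E ∧ IsDivForest F ∧
      ∀ v, (∀ u, (u, v) ∉ F) ↔ v ∈ Wf := by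
  classical
  -- BFS layers
  let S : ℕ → Set V := fun n =>
    Nat.rec (↑Wf) (fun _ Sn => Sn ∪ {v | ∃ u ∈ Sn, (u, v) ∈ E}) n
  have hS : ∀ v, ∃ n, v ∈ S n := by
    intro v
    obtain ⟨w, hw, hp⟩ := hdom v
    induction hp with
    | refl => exact ⟨0, hw⟩
    | tail hab hbc ih =>
      obtain ⟨n, hn⟩ := ih
      exact ⟨n + 1, Or.inr ⟨_, hn, hbc⟩⟩
  let rank : V → ℕ := fun v => sInf {n | v ∈ S n}
  have hrank_le : ∀ v n, v ∈ S n → rank v ≤ n := fun v n h => Nat.sInf_le h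
  have hrank_mem : ∀ v, v ∈ S (rank v) := fun v => Nat.sInf_mem (hS v)
  have hrank_not : ∀ v n, n < rank v → v ∉ S n := fun v n h => Nat.notMem_of_lt_sInf h
  have hrank0 : ∀ v, rank v = 0 ↔ v ∈ Wf := by
    intro v
    constructor
    · intro h
      have := hrank_mem v
      rw [h] at this
      exact this
    · intro h
      exact Nat.le_zero.1 (hrank_le v 0 h)
  have hpar : ∀ v, v ∉ Wf → ∃ u, (u, v) ∈ E ∧ rank u < rank v := by
    intro v hv
    have hne0 : rank v ≠ 0 := fun h => hv ((hrank0 v).1 h)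
    obtain ⟨m, hm⟩ : ∃ m, rank v = m + 1 := ⟨rank v - 1, by omega⟩
    have hspec : v ∈ S (rank v) := hrank_mem v
    rw [hm] at hspec
    have hnot : v ∉ S m := hrank_not v m (by omega)
    rcases hspec with h | ⟨u, hu, huv⟩
    · exact absurd h hnot
    · refine ⟨u, huv, ?_⟩
      have hle : rank u ≤ m := hrank_le u m hu
      omega
  choose! par hparE hparlt using hpar
  refine ⟨(Finset.univ.filter (fun v => v ∉ Wf)).image (fun v => (par v, v)),
    ?_, ⟨?_, ?_⟩, ?_⟩
  · intro a ha
    simp only [Finset.mem_image, Finset.mem_filter, Finset.mem_univ, true_and] at ha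
    obtain ⟨v, hv, rfl⟩ := ha
    exact hparE v hv
  · -- acyclic
    intro v hv
    have hlt : ∀ a b, arcRel ((Finset.univ.filter (fun v => v ∉ Wf)).image
        (fun v => (par v, v))) a b → rank a < rank b := by
      intro a b hab
      simp only [arcRel, Finset.mem_image, Finset.mem_filter, Finset.mem_univ,
        true_and] at hab
      obtain ⟨x, hx, hxe⟩ := hab
      have h1 : par x = a := congrArg Prod.fst hxe
      have h2 : x = b := congrArg Prod.snd hxe
      subst h1; subst h2
      exact hparlt x hx
    have hmono : ∀ a b, Relation.TransGen (arcRel ((Finset.univ.filter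
        (fun v => v ∉ Wf)).image (fun v => (par v, v)))) a b → rank a < rank b := by
      intro a b h
      induction h with
      | single h => exact hlt _ _ h
      | tail _ h ih => exact ih.trans (hlt _ _ h)
    exact absurd (hmono v v hv) (lt_irrefl _)
  · -- in-degree ≤ 1
    intro w z₁ z₂ h1 h2
    simp only [Finset.mem_image, Finset.mem_filter, Finset.mem_univ, true_and] at h1 h2
    obtain ⟨x, hx, hxe⟩ := h1
    obtain ⟨y, hy, hye⟩ := h2
    have hxw : x = w := congrArg Prod.snd hxe
    have hyw : y = w := congrArg Prod.snd hye
    exact (congrArg Prod.fst hxe).symm.trans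
      (by rw [hxw, ← hyw]; exact congrArg Prod.fst hye)
  · -- roots characterization
    intro v
    constructor
    · intro h
      by_contra hv
      exact h (par v)
        (Finset.mem_image.2 ⟨v, Finset.mem_filter.2 ⟨Finset.mem_univ v, hv⟩, rfl⟩)
    · intro hv u hu
      simp only [Finset.mem_image, Finset.mem_filter, Finset.mem_univ, true_and] at hu
      obtain ⟨x, hx, hxe⟩ := hu
      have : x = v := congrArg Prod.snd hxe
      exact hx (this ▸ hv)

end Aux

theorem stmt7 {V : Type*} [Fintype V] [DecidableEq V] (E : Finset (V × V)) (W : Set V) :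
    (∃ F : Finset (V × V), IsMaxOutForest E F ∧ W = {w | ∀ u, (u, w) ∉ F}) ↔
      IsVertexBasis E W := by
  classical
  constructor
  · rintro ⟨F, ⟨hFE, hFor, hmax⟩, rfl⟩
    constructor
    · intro v
      obtain ⟨w, hw, hp⟩ := forest_reach F hFor v
      exact ⟨w, hw, Relation.ReflTransGen.mono (fun a b h => hFE h) _ _ hp⟩
    · intro w₁ h₁ w₂ h₂ hne hreach
      simp only [Set.mem_setOf_eq] at h₁ h₂
      let R := Finset.univ.filter (fun v => ∀ u, (u, v) ∉ F)
      have hR : R = Finset.univ.filter (fun v => ∀ u, (u, v) ∉ F) := rfl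
      have hw₁R : w₁ ∈ R := Finset.mem_filter.2 ⟨Finset.mem_univ _, h₁⟩
      have hw₂R : w₂ ∈ R := Finset.mem_filter.2 ⟨Finset.mem_univ _, h₂⟩
      let Wf' := R.erase w₂
      have hdom' : ∀ v, ∃ w ∈ Wf', Relation.ReflTransGen (arcRel E) w v := by
        intro v
        obtain ⟨w, hw, hp⟩ := forest_reach F hFor v
        have hpE : Relation.ReflTransGen (arcRel E) w v := Relation.ReflTransGen.mono (fun a b h => hFE h) _ _ hp
        by_cases hww : w = w₂
        · exact ⟨w₁, Finset.mem_erase.2 ⟨hne, hw₁R⟩, hreach.trans (hww ▸ hpE)⟩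
        · exact ⟨w, Finset.mem_erase.2 ⟨hww,
            Finset.mem_filter.2 ⟨Finset.mem_univ _, hw⟩⟩, hpE⟩
      obtain ⟨F', hF'E, hF'or, hroots⟩ := build_forest E Wf' hdom'
      have c1 := forest_card F hFor
      have c2 := forest_card F' hF'or
      have hfilt : Finset.univ.filter (fun v => ∀ u, (u, v) ∉ F') = Wf' := by
        ext v
        simp only [Finset.mem_filter, Finset.mem_univ, true_and]
        exact hroots v
      rw [hfilt] at c2
      have hcard : Wf'.card = R.card - 1 := Finset.card_erase_of_mem hw₂R
      have hRpos : 1 ≤ R.card := Finset.card_pos.2 ⟨w₂, hw₂R⟩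
      have hle := hmax F' hF'E hF'or
      rw [hR] at hcard hRpos
      omega
  · rintro ⟨hdom, hsep⟩
    have hfin : W.Finite := Set.toFinite W
    set Wf := hfin.toFinset with hWfdef
    have hWf : ∀ v, v ∈ Wf ↔ v ∈ W := fun v => Set.Finite.mem_toFinset _
    have hdomf : ∀ v, ∃ w ∈ Wf, Relation.ReflTransGen (arcRel E) w v := by
      intro v
      obtain ⟨w, hw, hp⟩ := hdom v
      exact ⟨w, (hWf w).2 hw, hp⟩
    obtain ⟨F, hFE, hFor, hroots⟩ := build_forest E Wf hdomf
    refine ⟨F, ⟨hFE, hFor, ?_⟩, ?_⟩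
    · intro F' hF'E hF'or
      have c1 := forest_card F hFor
      have c2 := forest_card F' hF'or
      let R' := Finset.univ.filter (fun v => ∀ u, (u, v) ∉ F')
      have hreach' : ∀ w : V, ∃ d ∈ R', Relation.ReflTransGen (arcRel E) d w := by
        intro w
        obtain ⟨d, hd, hp⟩ := forest_reach F' hF'or w
        exact ⟨d, Finset.mem_filter.2 ⟨Finset.mem_univ _, hd⟩,
          Relation.ReflTransGen.mono (fun a b h => hF'E h) _ _ hp⟩
      choose dfun hd1 hd2 using hreach'
      have hinj : Set.InjOn dfun ↑Wf := by
        intro a ha b hb hab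
        simp only [Finset.coe_mem, Finset.mem_coe] at ha hb
        obtain ⟨w, hw, hwp⟩ := hdom (dfun a)
        have haa : w = a := by
          by_contra hne
          exact hsep w hw a ((hWf a).1 ha) hne (hwp.trans (hd2 a))
        have hbb : w = b := by
          by_contra hne
          exact hsep w hw b ((hWf b).1 hb) hne ((hab ▸ hwp).trans (hd2 b))
        exact haa ▸ hbb
      have hcard := Finset.card_le_card_of_injOn dfun (fun a _ => hd1 a) hinj
      have hfilt : Finset.univ.filter (fun v => ∀ u, (u, v) ∉ F) = Wf := by
        ext v
        simp only [Finset.mem_filter, Finset.mem_univ, true_and]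
        exact hroots v
      rw [hfilt] at c1
      have hcard' : Wf.card ≤ (Finset.univ.filter (fun v => ∀ u, (u, v) ∉ F')).card :=
        hcard
      omega
    · ext w
      simp only [Set.mem_setOf_eq]
      rw [← hWf w]
      exact ((hroots w).symm : _)
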